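/- arXiv:2108.03213 — 6 statements merged into one kernel-verified Lean document; each statement's English description precedes it below -/
import Mathlib

section
/- Let S and O be finite nonempty sets and let (r₁,p₁) and (r₂,p₂) be two SMDP models over (S,O) (rewards rᵢ : S × O → ℝ, nonnegative kernels pᵢ : S × O × S → ℝ) with γ̄₂ := max_{s,o} ∑_{s'} p₂(s,o,s') < 1. Let Q₁ and Q₂ be Bellman-optimal value functions for (r₁,p₁) and (r₂,p₂) respectively. Then ‖Q₁ − Q₂‖_∞ ≤ (1 − γ̄₂)⁻¹ · ( ‖r₁ − r₂‖_∞ + κ · ‖Q₁‖_∞ ), where κ := max_{s,o} ∑_{s'} |p₁(s,o,s') − p₂(s,o,s')| and ‖·‖_∞ denotes the maximum absolute value over the finite domain. -/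
/-- Maximum of a real-valued function over a finite nonempty type. -/
noncomputable def fmax {α : Type*} [Fintype α] [Nonempty α] (f : α → ℝ) : ℝ :=
  Finset.univ.sup' Finset.univ_nonempty f

lemma fmax_le {α : Type*} [Fintype α] [Nonempty α] {f : α → ℝ} {c : ℝ}
    (h : ∀ a, f a ≤ c) : fmax f ≤ c :=
  Finset.sup'_le _ _ fun a _ => h a

lemma le_fmax {α : Type*} [Fintype α] [Nonempty α] (f : α → ℝ) (a : α) : f a ≤ fmax f :=
  Finset.le_sup' f (Finset.mem_univ a)

lemma abs_fmax_le {α : Type*} [Fintype α] [Nonempty α] {f : α → ℝ} {c : ℝ}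
    (h : ∀ a, |f a| ≤ c) : |fmax f| ≤ c := by
  rw [abs_le]
  constructor
  · obtain ⟨a⟩ := (inferInstance : Nonempty α)
    exact le_trans (neg_le_of_abs_le (h a)) (le_fmax f a)
  · exact fmax_le fun a => le_of_abs_le (h a)

lemma abs_fmax_sub_fmax_le {α : Type*} [Fintype α] [Nonempty α] {f g : α → ℝ} {c : ℝ}
    (h : ∀ a, |f a - g a| ≤ c) : |fmax f - fmax g| ≤ c := by
  rw [abs_sub_le_iff]
  constructor
  · refine sub_le_iff_le_add.2 (fmax_le fun a => ?_)
    have := (abs_sub_le_iff.1 (h a)).1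
    have := le_fmax g a
    linarith
  · refine sub_le_iff_le_add.2 (fmax_le fun a => ?_)
    have := (abs_sub_le_iff.1 (h a)).2
    have := le_fmax f a
    linarith

/-- Term-1 bound in the proof of Theorem 1: the gap between the optimal option value
functions of two SMDP models is controlled by the reward error and the
total-variation error of the transition models. -/
theorem optimal_value_gap_bound {S O : Type*} [Fintype S] [Fintype O] [Nonempty S] [Nonempty O]
    (r₁ r₂ : S → O → ℝ) (p₁ p₂ : S → O → S → ℝ) (γbar₂ κ : ℝ)
    (hp₁ : ∀ s o s', 0 ≤ p₁ s o s') (hp₂ : ∀ s o s', 0 ≤ p₂ s o s')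
    (hγ₂ : γbar₂ = fmax (fun so : S × O => ∑ s' : S, p₂ so.1 so.2 s'))
    (hγ₂lt : γbar₂ < 1)
    (hκ : κ = fmax (fun so : S × O => ∑ s' : S, |p₁ so.1 so.2 s' - p₂ so.1 so.2 s'|))
    (Q₁ Q₂ : S → O → ℝ)
    (hQ₁ : ∀ s o, Q₁ s o = r₁ s o + ∑ s' : S, p₁ s o s' * fmax (fun o' => Q₁ s' o'))
    (hQ₂ : ∀ s o, Q₂ s o = r₂ s o + ∑ s' : S, p₂ s o s' * fmax (fun o' => Q₂ s' o')) :
    fmax (fun so : S × O => |Q₁ so.1 so.2 - Q₂ so.1 so.2|) ≤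
      (1 - γbar₂)⁻¹ *
        (fmax (fun so : S × O => |r₁ so.1 so.2 - r₂ so.1 so.2|) +
          κ * fmax (fun so : S × O => |Q₁ so.1 so.2|)) := by
  set V₁ : S → ℝ := fun s' => fmax (fun o' => Q₁ s' o') with hV₁
  set V₂ : S → ℝ := fun s' => fmax (fun o' => Q₂ s' o') with hV₂
  set D := fmax (fun so : S × O => |Q₁ so.1 so.2 - Q₂ so.1 so.2|) with hD
  set R := fmax (fun so : S × O => |r₁ so.1 so.2 - r₂ so.1 so.2|) with hR
  set M := fmax (fun so : S × O => |Q₁ so.1 so.2|) with hM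
  have hM0 : 0 ≤ M :=
    le_trans (abs_nonneg _)
      (le_fmax (fun so : S × O => |Q₁ so.1 so.2|) (Classical.arbitrary (S × O)))
  have hD0 : 0 ≤ D :=
    le_trans (abs_nonneg _)
      (le_fmax (fun so : S × O => |Q₁ so.1 so.2 - Q₂ so.1 so.2|) (Classical.arbitrary (S × O)))
  have hVd : ∀ s', |V₁ s' - V₂ s'| ≤ D := fun s' =>
    abs_fmax_sub_fmax_le fun o' => le_fmax (fun so : S × O => |Q₁ so.1 so.2 - Q₂ so.1 so.2|) (s', o')
  have hVM : ∀ s', |V₁ s'| ≤ M := fun s' =>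
    abs_fmax_le fun o' => le_fmax (fun so : S × O => |Q₁ so.1 so.2|) (s', o')
  have key : ∀ s o, |Q₁ s o - Q₂ s o| ≤ R + κ * M + γbar₂ * D := by
    intro s o
    have e : Q₁ s o - Q₂ s o = (r₁ s o - r₂ s o)
        + ∑ s' : S, (p₁ s o s' - p₂ s o s') * V₁ s'
        + ∑ s' : S, p₂ s o s' * (V₁ s' - V₂ s') := by
      rw [hQ₁ s o, hQ₂ s o]
      simp only [sub_mul, mul_sub, Finset.sum_sub_distrib]
      ring
    have h1 : |∑ s' : S, (p₁ s o s' - p₂ s o s') * V₁ s'| ≤ κ * M := by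
      calc |∑ s' : S, (p₁ s o s' - p₂ s o s') * V₁ s'|
          ≤ ∑ s' : S, |(p₁ s o s' - p₂ s o s') * V₁ s'| := Finset.abs_sum_le_sum_abs _ _
        _ ≤ ∑ s' : S, |p₁ s o s' - p₂ s o s'| * M := by
            refine Finset.sum_le_sum fun s' _ => ?_
            rw [abs_mul]
            exact mul_le_mul_of_nonneg_left (hVM s') (abs_nonneg _)
        _ = (∑ s' : S, |p₁ s o s' - p₂ s o s'|) * M := by rw [Finset.sum_mul]
        _ ≤ κ * M := by
            refine mul_le_mul_of_nonneg_right ?_ hM0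
            rw [hκ]
            exact le_fmax (fun so : S × O => ∑ s' : S, |p₁ so.1 so.2 s' - p₂ so.1 so.2 s'|) (s, o)
    have h2 : |∑ s' : S, p₂ s o s' * (V₁ s' - V₂ s')| ≤ γbar₂ * D := by
      calc |∑ s' : S, p₂ s o s' * (V₁ s' - V₂ s')|
          ≤ ∑ s' : S, |p₂ s o s' * (V₁ s' - V₂ s')| := Finset.abs_sum_le_sum_abs _ _
        _ ≤ ∑ s' : S, p₂ s o s' * D := by
            refine Finset.sum_le_sum fun s' _ => ?_
            rw [abs_mul, abs_of_nonneg (hp₂ s o s')]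
            exact mul_le_mul_of_nonneg_left (hVd s') (hp₂ s o s')
        _ = (∑ s' : S, p₂ s o s') * D := by rw [Finset.sum_mul]
        _ ≤ γbar₂ * D := by
            refine mul_le_mul_of_nonneg_right ?_ hD0
            rw [hγ₂]
            exact le_fmax (fun so : S × O => ∑ s' : S, p₂ so.1 so.2 s') (s, o)
    have hr : |r₁ s o - r₂ s o| ≤ R :=
      le_fmax (fun so : S × O => |r₁ so.1 so.2 - r₂ so.1 so.2|) (s, o)
    calc |Q₁ s o - Q₂ s o|
        ≤ |r₁ s o - r₂ s o| + |∑ s' : S, (p₁ s o s' - p₂ s o s') * V₁ s'|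
            + |∑ s' : S, p₂ s o s' * (V₁ s' - V₂ s')| := by
          rw [e]; exact le_trans (abs_add_le _ _) (by gcongr; exact abs_add_le _ _)
      _ ≤ R + κ * M + γbar₂ * D := by gcongr
  have hDle : D ≤ R + κ * M + γbar₂ * D := fmax_le fun so => key so.1 so.2
  have hpos : 0 < 1 - γbar₂ := by linarith
  rw [le_inv_mul_iff₀ hpos]
  nlinarith [hDle]
end

section
/- Let S and O be finite nonempty sets and let (r₁,p₁) and (r₂,p₂) be two SMDP models over (S,O) (rewards rᵢ : S × O → ℝ, nonnegative kernels pᵢ : S × O × S → ℝ) with γ̄₂ := max_{s,o} ∑_{s'} p₂(s,o,s') < 1. Let π : S → O be a deterministic policy and let V₁ and V₂ satisfy the policy-evaluation equations Vᵢ(s) = rᵢ(s,π(s)) + ∑_{s'} pᵢ(s,π(s),s') · Vᵢ(s') for all s (i = 1, 2). Then ‖V₁ − V₂‖_∞ ≤ (1 − γ̄₂)⁻¹ · ( ‖r₁ − r₂‖_∞ + κ · ‖V₁‖_∞ ), where κ := max_{s,o} ∑_{s'} |p₁(s,o,s') − p₂(s,o,s')|. -/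
/-- Term-2 bound in the proof of Theorem 1 (Lemma 5): evaluating the same policy in
two SMDP models gives values differing by at most the stated combination of reward
error and total-variation transition error. -/
theorem policy_evaluation_gap_bound {S O : Type*} [Fintype S] [Fintype O] [Nonempty S] [Nonempty O]
    (r₁ r₂ : S → O → ℝ) (p₁ p₂ : S → O → S → ℝ) (γbar₂ κ : ℝ)
    (hp₁ : ∀ s o s', 0 ≤ p₁ s o s') (hp₂ : ∀ s o s', 0 ≤ p₂ s o s')
    (hγ₂ : γbar₂ = fmax (fun so : S × O => ∑ s' : S, p₂ so.1 so.2 s'))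
    (hγ₂lt : γbar₂ < 1)
    (hκ : κ = fmax (fun so : S × O => ∑ s' : S, |p₁ so.1 so.2 s' - p₂ so.1 so.2 s'|))
    (π : S → O) (V₁ V₂ : S → ℝ)
    (hV₁ : ∀ s, V₁ s = r₁ s (π s) + ∑ s' : S, p₁ s (π s) s' * V₁ s')
    (hV₂ : ∀ s, V₂ s = r₂ s (π s) + ∑ s' : S, p₂ s (π s) s' * V₂ s') :
    fmax (fun s : S => |V₁ s - V₂ s|) ≤
      (1 - γbar₂)⁻¹ *
        (fmax (fun so : S × O => |r₁ so.1 so.2 - r₂ so.1 so.2|) +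
          κ * fmax (fun s : S => |V₁ s|)) := by
  obtain ⟨s₀⟩ := ‹Nonempty S›
  have hD0 : 0 ≤ fmax (fun s : S => |V₁ s - V₂ s|) :=
    le_trans (abs_nonneg _) (le_fmax (fun s : S => |V₁ s - V₂ s|) s₀)
  have hM0 : 0 ≤ fmax (fun s : S => |V₁ s|) :=
    le_trans (abs_nonneg _) (le_fmax (fun s : S => |V₁ s|) s₀)
  have key : fmax (fun s : S => |V₁ s - V₂ s|) ≤
      fmax (fun so : S × O => |r₁ so.1 so.2 - r₂ so.1 so.2|) +
        κ * fmax (fun s : S => |V₁ s|) + γbar₂ * fmax (fun s : S => |V₁ s - V₂ s|) := by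
    apply fmax_le
    intro s
    have e : ∀ x : S, (p₁ s (π s) x - p₂ s (π s) x) * V₁ x + p₂ s (π s) x * (V₁ x - V₂ x)
        = p₁ s (π s) x * V₁ x - p₂ s (π s) x * V₂ x := fun x => by ring
    have hsplit : V₁ s - V₂ s =
        (r₁ s (π s) - r₂ s (π s)) +
        (∑ s' : S, (p₁ s (π s) s' - p₂ s (π s) s') * V₁ s') +
        (∑ s' : S, p₂ s (π s) s' * (V₁ s' - V₂ s')) := by
      rw [hV₁ s, hV₂ s, add_assoc, ← Finset.sum_add_distrib,
        Finset.sum_congr rfl (fun x _ => e x), Finset.sum_sub_distrib]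
      ring
    have h1 : |r₁ s (π s) - r₂ s (π s)| ≤
        fmax (fun so : S × O => |r₁ so.1 so.2 - r₂ so.1 so.2|) :=
      le_fmax (fun so : S × O => |r₁ so.1 so.2 - r₂ so.1 so.2|) (s, π s)
    have h2 : |∑ s' : S, (p₁ s (π s) s' - p₂ s (π s) s') * V₁ s'| ≤
        κ * fmax (fun s : S => |V₁ s|) := by
      calc |∑ s' : S, (p₁ s (π s) s' - p₂ s (π s) s') * V₁ s'|
          ≤ ∑ s' : S, |(p₁ s (π s) s' - p₂ s (π s) s') * V₁ s'| :=
            Finset.abs_sum_le_sum_abs _ _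
        _ ≤ ∑ s' : S, |p₁ s (π s) s' - p₂ s (π s) s'| * fmax (fun s : S => |V₁ s|) := by
            apply Finset.sum_le_sum
            intro x _
            rw [abs_mul]
            exact mul_le_mul_of_nonneg_left (le_fmax (fun s : S => |V₁ s|) x) (abs_nonneg _)
        _ = (∑ s' : S, |p₁ s (π s) s' - p₂ s (π s) s'|) * fmax (fun s : S => |V₁ s|) := by
            rw [Finset.sum_mul]
        _ ≤ κ * fmax (fun s : S => |V₁ s|) := by
            apply mul_le_mul_of_nonneg_right _ hM0
            rw [hκ]; exact le_fmax (fun so : S × O => ∑ s' : S, |p₁ so.1 so.2 s' - p₂ so.1 so.2 s'|) (s, π s)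
    have h3 : |∑ s' : S, p₂ s (π s) s' * (V₁ s' - V₂ s')| ≤
        γbar₂ * fmax (fun s : S => |V₁ s - V₂ s|) := by
      calc |∑ s' : S, p₂ s (π s) s' * (V₁ s' - V₂ s')|
          ≤ ∑ s' : S, |p₂ s (π s) s' * (V₁ s' - V₂ s')| :=
            Finset.abs_sum_le_sum_abs _ _
        _ ≤ ∑ s' : S, p₂ s (π s) s' * fmax (fun s : S => |V₁ s - V₂ s|) := by
            apply Finset.sum_le_sum
            intro x _
            rw [abs_mul, abs_of_nonneg (hp₂ _ _ _)]
            exact mul_le_mul_of_nonneg_left (le_fmax (fun s : S => |V₁ s - V₂ s|) x) (hp₂ _ _ _)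
        _ = (∑ s' : S, p₂ s (π s) s') * fmax (fun s : S => |V₁ s - V₂ s|) := by
            rw [Finset.sum_mul]
        _ ≤ γbar₂ * fmax (fun s : S => |V₁ s - V₂ s|) := by
            apply mul_le_mul_of_nonneg_right _ hD0
            rw [hγ₂]; exact le_fmax (fun so : S × O => ∑ s' : S, p₂ so.1 so.2 s') (s, π s)
    calc |V₁ s - V₂ s| ≤ |r₁ s (π s) - r₂ s (π s)| +
        |∑ s' : S, (p₁ s (π s) s' - p₂ s (π s) s') * V₁ s'| +
        |∑ s' : S, p₂ s (π s) s' * (V₁ s' - V₂ s')| := by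
          rw [hsplit]
          exact (abs_add_le _ _).trans (add_le_add_left (abs_add_le _ _) _)
      _ ≤ _ := by gcongr
  have hpos : (0:ℝ) < 1 - γbar₂ := by linarith
  rw [inv_mul_eq_div, le_div_iff₀ hpos]
  nlinarith [key]
end

section
/- Let S and O be finite nonempty sets. Let M = (r,p) and M_I = (r_I,p_I) be two SMDP models over (S,O) with 0 ≤ r(s,o) ≤ Rmax for all (s,o), γ̄ := max_{s,o} ∑_{s'} p(s,o,s') < 1, γ̄_I := max_{s,o} ∑_{s'} p_I(s,o,s') < 1, ‖r − r_I‖_∞ ≤ ζ_R, and max_{s,o} ∑_{s'} |p(s,o,s') − p_I(s,o,s')| ≤ ζ_P. Let Q* and Q*_I be Bellman-optimal value functions for M and M_I respectively, let π_I : S → O be greedy with respect to Q*_I (i.e. Q*_I(s, π_I(s)) = max_o Q*_I(s,o) for all s), let V^{π_I} be the value of π_I in M, and let V*(s) = max_o Q*(s,o). Then ‖V^{π_I} − V*‖_∞ ≤ 2ζ_R/(1 − γ̄_I) + 2 Rmax ζ_P / ((1 − γ̄_I)(1 − γ̄)). -/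
lemma sum_mul_abs_le' {S : Type*} [Fintype S] (q V : S → ℝ) {B ζ : ℝ}
    (hqs : ∑ s, |q s| ≤ ζ) (hV : ∀ s, |V s| ≤ B) (hB : 0 ≤ B) :
    |∑ s, q s * V s| ≤ ζ * B := by
  calc |∑ s, q s * V s| ≤ ∑ s, |q s * V s| := Finset.abs_sum_le_sum_abs _ _
    _ = ∑ s, |q s| * |V s| := by simp [abs_mul]
    _ ≤ ∑ s, |q s| * B :=
        Finset.sum_le_sum fun s _ => mul_le_mul_of_nonneg_left (hV s) (abs_nonneg _)
    _ = (∑ s, |q s|) * B := by rw [Finset.sum_mul]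
    _ ≤ ζ * B := mul_le_mul_of_nonneg_right hqs hB

lemma sum_mul_abs_le {S : Type*} [Fintype S] (q V : S → ℝ) {B γ : ℝ}
    (hq : ∀ s, 0 ≤ q s) (hqs : ∑ s, q s ≤ γ) (hV : ∀ s, |V s| ≤ B) (hB : 0 ≤ B) :
    |∑ s, q s * V s| ≤ γ * B := by
  apply sum_mul_abs_le' q V _ hV hB
  simpa [abs_of_nonneg (hq _)] using hqs

/-- Theorem 1 (trajectory-based value-loss bound, kernel form): the value loss of the
policy optimal for the intent-induced SMDP when executed in the true SMDP. -/
theorem value_loss_bound {S O : Type*} [Fintype S] [Fintype O] [Nonempty S] [Nonempty O]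
    (r rI : S → O → ℝ) (p pI : S → O → S → ℝ)
    (Rmax γbar γbarI ζR ζP : ℝ)
    (hr0 : ∀ s o, 0 ≤ r s o) (hrR : ∀ s o, r s o ≤ Rmax)
    (hp : ∀ s o s', 0 ≤ p s o s') (hpI : ∀ s o s', 0 ≤ pI s o s')
    (hγ : γbar = fmax (fun so : S × O => ∑ s' : S, p so.1 so.2 s')) (hγlt : γbar < 1)
    (hγI : γbarI = fmax (fun so : S × O => ∑ s' : S, pI so.1 so.2 s')) (hγIlt : γbarI < 1)
    (hζR : fmax (fun so : S × O => |r so.1 so.2 - rI so.1 so.2|) ≤ ζR)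
    (hζP : fmax (fun so : S × O => ∑ s' : S, |p so.1 so.2 s' - pI so.1 so.2 s'|) ≤ ζP)
    (Qstar QI : S → O → ℝ)
    (hQstar : ∀ s o, Qstar s o = r s o + ∑ s' : S, p s o s' * fmax (fun o' => Qstar s' o'))
    (hQI : ∀ s o, QI s o = rI s o + ∑ s' : S, pI s o s' * fmax (fun o' => QI s' o'))
    (πI : S → O)
    (hgreedy : ∀ s, QI s (πI s) = fmax (fun o => QI s o))
    (VπI : S → ℝ)
    (hVπI : ∀ s, VπI s = r s (πI s) + ∑ s' : S, p s (πI s) s' * VπI s')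
    (Vstar : S → ℝ)
    (hVstar : ∀ s, Vstar s = fmax (fun o => Qstar s o)) :
    fmax (fun s : S => |VπI s - Vstar s|) ≤
      2 * ζR / (1 - γbarI) + 2 * Rmax * ζP / ((1 - γbarI) * (1 - γbar)) := by
  obtain ⟨s₀⟩ := (inferInstance : Nonempty S)
  obtain ⟨o₀⟩ := (inferInstance : Nonempty O)
  have h1γ : 0 < 1 - γbar := by linarith
  have h1γI : 0 < 1 - γbarI := by linarith
  have hRmax0 : 0 ≤ Rmax := le_trans (hr0 s₀ o₀) (hrR s₀ o₀)
  -- pointwise consequences of the fmax hypotheses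
  have hpsum : ∀ s o, ∑ s' : S, p s o s' ≤ γbar := fun s o => by
    rw [hγ]; exact le_fmax (fun so : S × O => ∑ s' : S, p so.1 so.2 s') (s, o)
  have hpIsum : ∀ s o, ∑ s' : S, pI s o s' ≤ γbarI := fun s o => by
    rw [hγI]; exact le_fmax (fun so : S × O => ∑ s' : S, pI so.1 so.2 s') (s, o)
  have hrle : ∀ s o, |r s o - rI s o| ≤ ζR := fun s o =>
    le_trans (le_fmax (fun so : S × O => |r so.1 so.2 - rI so.1 so.2|) (s, o)) hζR
  have hple : ∀ s o, ∑ s' : S, |p s o s' - pI s o s'| ≤ ζP := fun s o =>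
    le_trans (le_fmax (fun so : S × O => ∑ s' : S, |p so.1 so.2 s' - pI so.1 so.2 s'|) (s, o)) hζP
  have hrabs : ∀ s o, |r s o| ≤ Rmax := fun s o =>
    abs_le.mpr ⟨by linarith [hr0 s o], hrR s o⟩
  have hVQ : ∀ s', fmax (fun o' => Qstar s' o') = Vstar s' := fun s' => (hVstar s').symm
  set Vmax : ℝ := Rmax / (1 - γbar) with hVmaxdef
  have hVmax0 : 0 ≤ Vmax := div_nonneg hRmax0 (le_of_lt h1γ)
  -- bound on ‖Vstar‖
  have hVsb : ∀ s, |Vstar s| ≤ Vmax := by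
    set B := fmax (fun s => |Vstar s|) with hBdef
    have hB : ∀ s, |Vstar s| ≤ B := fun s => le_fmax (fun s => |Vstar s|) s
    have hB0 : 0 ≤ B := le_trans (abs_nonneg _) (hB s₀)
    have hQb : ∀ s o, |Qstar s o| ≤ Rmax + γbar * B := by
      intro s o
      rw [hQstar s o]
      have h2 : |∑ s' : S, p s o s' * fmax (fun o' => Qstar s' o')| ≤ γbar * B := by
        simp only [hVQ]
        exact sum_mul_abs_le _ _ (hp s o) (hpsum s o) hB hB0
      calc |r s o + ∑ s' : S, p s o s' * fmax (fun o' => Qstar s' o')|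
          ≤ |r s o| + |∑ s' : S, p s o s' * fmax (fun o' => Qstar s' o')| := abs_add_le _ _
        _ ≤ Rmax + γbar * B := add_le_add (hrabs s o) h2
    have hkey : B ≤ Rmax + γbar * B := by
      apply fmax_le
      intro s
      rw [hVstar s]
      exact abs_fmax_le (fun o => hQb s o)
    have hBle : B ≤ Vmax := by
      rw [hVmaxdef, le_div_iff₀ h1γ]; nlinarith
    exact fun s => le_trans (hB s) hBle
  -- bound on ‖VπI‖
  have hVπb : ∀ s, |VπI s| ≤ Vmax := by
    set B := fmax (fun s => |VπI s|) with hBdef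
    have hB : ∀ s, |VπI s| ≤ B := fun s => le_fmax (fun s => |VπI s|) s
    have hB0 : 0 ≤ B := le_trans (abs_nonneg _) (hB s₀)
    have hkey : B ≤ Rmax + γbar * B := by
      apply fmax_le
      intro s
      rw [hVπI s]
      calc |r s (πI s) + ∑ s' : S, p s (πI s) s' * VπI s'|
          ≤ |r s (πI s)| + |∑ s' : S, p s (πI s) s' * VπI s'| := abs_add_le _ _
        _ ≤ Rmax + γbar * B :=
            add_le_add (hrabs s (πI s))
              (sum_mul_abs_le _ _ (hp s (πI s)) (hpsum s (πI s)) hB hB0)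
    have hBle : B ≤ Vmax := by
      rw [hVmaxdef, le_div_iff₀ h1γ]; nlinarith
    exact fun s => le_trans (hB s) hBle
  -- Step A : ‖Qstar - QI‖ bound
  set D := fmax (fun so : S × O => |Qstar so.1 so.2 - QI so.1 so.2|) with hDdef
  have hD : ∀ s o, |Qstar s o - QI s o| ≤ D := fun s o =>
    le_fmax (fun so : S × O => |Qstar so.1 so.2 - QI so.1 so.2|) (s, o)
  have hD0 : 0 ≤ D := le_trans (abs_nonneg _) (hD s₀ o₀)
  have hVID : ∀ s', |Vstar s' - fmax (fun o' => QI s' o')| ≤ D := by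
    intro s'
    rw [hVstar s']
    exact abs_fmax_sub_fmax_le (fun o => hD s' o)
  have hDkey : D ≤ ζR + ζP * Vmax + γbarI * D := by
    apply fmax_le
    rintro ⟨s, o⟩
    dsimp only
    have hexp : Qstar s o - QI s o =
        (r s o - rI s o) + (∑ s' : S, (p s o s' - pI s o s') * Vstar s')
          + (∑ s' : S, pI s o s' * (Vstar s' - fmax (fun o' => QI s' o'))) := by
      have h1 : ∑ s' : S, (p s o s' - pI s o s') * Vstar s'
          = (∑ s' : S, p s o s' * Vstar s') - ∑ s' : S, pI s o s' * Vstar s' := by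
        rw [← Finset.sum_sub_distrib]
        exact Finset.sum_congr rfl fun s' _ => by ring
      have h2 : ∑ s' : S, pI s o s' * (Vstar s' - fmax (fun o' => QI s' o'))
          = (∑ s' : S, pI s o s' * Vstar s')
            - ∑ s' : S, pI s o s' * fmax (fun o' => QI s' o') := by
        rw [← Finset.sum_sub_distrib]
        exact Finset.sum_congr rfl fun s' _ => by ring
      rw [hQstar s o, hQI s o]
      simp only [hVQ]
      rw [h1, h2]; ring
    rw [hexp]
    calc |(r s o - rI s o) + (∑ s' : S, (p s o s' - pI s o s') * Vstar s')
          + (∑ s' : S, pI s o s' * (Vstar s' - fmax (fun o' => QI s' o')))|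
        ≤ |(r s o - rI s o) + (∑ s' : S, (p s o s' - pI s o s') * Vstar s')|
          + |∑ s' : S, pI s o s' * (Vstar s' - fmax (fun o' => QI s' o'))| := abs_add_le _ _
      _ ≤ (|r s o - rI s o| + |∑ s' : S, (p s o s' - pI s o s') * Vstar s'|)
          + |∑ s' : S, pI s o s' * (Vstar s' - fmax (fun o' => QI s' o'))| :=
          add_le_add_left (abs_add_le _ _) _
      _ ≤ (ζR + ζP * Vmax) + γbarI * D := by
          apply add_le_add
          · exact add_le_add (hrle s o)
              (sum_mul_abs_le' _ _ (hple s o) hVsb hVmax0)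
          · exact sum_mul_abs_le _ _ (hpI s o) (hpIsum s o) hVID hD0
      _ = ζR + ζP * Vmax + γbarI * D := by ring
  have hDfin : D ≤ (ζR + ζP * Vmax) / (1 - γbarI) := by
    rw [le_div_iff₀ h1γI]; nlinarith
  -- Step B : ‖VπI - VI‖ bound
  set E := fmax (fun s : S => |VπI s - fmax (fun o => QI s o)|) with hEdef
  have hE : ∀ s, |VπI s - fmax (fun o => QI s o)| ≤ E := fun s =>
    le_fmax (fun s : S => |VπI s - fmax (fun o => QI s o)|) s
  have hE0 : 0 ≤ E := le_trans (abs_nonneg _) (hE s₀)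
  have hEkey : E ≤ ζR + ζP * Vmax + γbarI * E := by
    apply fmax_le
    intro s
    have hexp : VπI s - fmax (fun o => QI s o) =
        (r s (πI s) - rI s (πI s))
          + (∑ s' : S, (p s (πI s) s' - pI s (πI s) s') * VπI s')
          + (∑ s' : S, pI s (πI s) s' * (VπI s' - fmax (fun o' => QI s' o'))) := by
      have h1 : ∑ s' : S, (p s (πI s) s' - pI s (πI s) s') * VπI s'
          = (∑ s' : S, p s (πI s) s' * VπI s') - ∑ s' : S, pI s (πI s) s' * VπI s' := by
        rw [← Finset.sum_sub_distrib]
        exact Finset.sum_congr rfl fun s' _ => by ring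
      have h2 : ∑ s' : S, pI s (πI s) s' * (VπI s' - fmax (fun o' => QI s' o'))
          = (∑ s' : S, pI s (πI s) s' * VπI s')
            - ∑ s' : S, pI s (πI s) s' * fmax (fun o' => QI s' o') := by
        rw [← Finset.sum_sub_distrib]
        exact Finset.sum_congr rfl fun s' _ => by ring
      rw [← hgreedy s, hVπI s, hQI s (πI s), h1, h2]; ring
    rw [hexp]
    calc |(r s (πI s) - rI s (πI s))
          + (∑ s' : S, (p s (πI s) s' - pI s (πI s) s') * VπI s')
          + (∑ s' : S, pI s (πI s) s' * (VπI s' - fmax (fun o' => QI s' o')))|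
        ≤ (|r s (πI s) - rI s (πI s)|
          + |∑ s' : S, (p s (πI s) s' - pI s (πI s) s') * VπI s'|)
          + |∑ s' : S, pI s (πI s) s' * (VπI s' - fmax (fun o' => QI s' o'))| :=
          le_trans (abs_add_le _ _) (add_le_add_left (abs_add_le _ _) _)
      _ ≤ (ζR + ζP * Vmax) + γbarI * E := by
          apply add_le_add
          · exact add_le_add (hrle s (πI s))
              (sum_mul_abs_le' _ _ (hple s (πI s)) hVπb hVmax0)
          · exact sum_mul_abs_le _ _ (hpI s (πI s)) (hpIsum s (πI s))
              (fun s' => hE s') hE0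
      _ = ζR + ζP * Vmax + γbarI * E := by ring
  have hEfin : E ≤ (ζR + ζP * Vmax) / (1 - γbarI) := by
    rw [le_div_iff₀ h1γI]; nlinarith
  -- conclusion
  have hfinal : 2 * ((ζR + ζP * Vmax) / (1 - γbarI))
      = 2 * ζR / (1 - γbarI) + 2 * Rmax * ζP / ((1 - γbarI) * (1 - γbar)) := by
    rw [hVmaxdef]
    field_simp
  apply fmax_le
  intro s
  have h1 := hE s
  have h2 := hVID s
  have : |VπI s - Vstar s| ≤ E + D := by
    calc |VπI s - Vstar s|
        ≤ |VπI s - fmax (fun o => QI s o)| + |fmax (fun o => QI s o) - Vstar s| := by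
          have := abs_sub_le (VπI s) (fmax (fun o => QI s o)) (Vstar s); linarith
      _ ≤ E + D := add_le_add h1 (by rw [abs_sub_comm]; exact h2)
  linarith [hDfin, hEfin]
end

section
/- Let S and O be finite nonempty sets, M_I = (r_I,p_I) an SMDP model over (S,O), and M̂ = (r̂,p̂) an SMDP model over (S,O) with γ̄̂ := max_{s,o} ∑_{s'} p̂(s,o,s') < 1. Let π*, π̂* : S → O be deterministic policies; for each π ∈ {π*, π̂*} let V^π_{M_I} and V^π_{M̂} denote the values of π in M_I and M̂. Assume V^{π̂*}_{M_I}(s) ≤ V^{π*}_{M_I}(s) and V^{π*}_{M̂}(s) ≤ V^{π̂*}_{M̂}(s) for all s (π* optimal in M_I and π̂* optimal in M̂ over the pair). If, for some t ≥ 0 and for every π ∈ {π*, π̂*} and every s ∈ S, | r̂(s,π(s)) + ∑_{s'} p̂(s,π(s),s') · V^π_{M_I}(s') − V^π_{M_I}(s) | ≤ t, then ‖V^{π*}_{M_I} − V^{π̂*}_{M_I}‖_∞ ≤ 2t / (1 − γ̄̂). -/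
lemma key_sim_bound {S O : Type*} [Fintype S] [Fintype O] [Nonempty S] [Nonempty O]
    (rhat : S → O → ℝ) (phat : S → O → S → ℝ) (γhat : ℝ)
    (hphat : ∀ s o s', 0 ≤ phat s o s')
    (hγ : γhat = fmax (fun so : S × O => ∑ s' : S, phat so.1 so.2 s'))
    (hγlt : γhat < 1)
    (π : S → O) (V W : S → ℝ) (t : ℝ)
    (hV : ∀ s, V s = rhat s (π s) + ∑ s' : S, phat s (π s) s' * V s')
    (hres : ∀ s, |rhat s (π s) + (∑ s' : S, phat s (π s) s' * W s') - W s| ≤ t) :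
    ∀ s, |V s - W s| ≤ t / (1 - γhat) := by
  set M := fmax (fun s : S => |V s - W s|) with hM
  have hpos : (0 : ℝ) < 1 - γhat := by linarith
  obtain ⟨s0, _, hs0⟩ := Finset.exists_mem_eq_sup' (Finset.univ_nonempty (α := S))
    (fun s : S => |V s - W s|)
  have hMle : ∀ s, |V s - W s| ≤ M := fun s =>
    Finset.le_sup' (fun s : S => |V s - W s|) (Finset.mem_univ s)
  have hMnonneg : 0 ≤ M := le_trans (abs_nonneg _) (hMle s0)
  have hγle : ∑ s' : S, phat s0 (π s0) s' ≤ γhat := by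
    rw [hγ]
    exact Finset.le_sup' (fun so : S × O => ∑ s' : S, phat so.1 so.2 s')
      (Finset.mem_univ (s0, π s0))
  have hstep : M ≤ γhat * M + t := by
    have h1 : V s0 - W s0 =
        (∑ s' : S, phat s0 (π s0) s' * (V s' - W s')) +
        (rhat s0 (π s0) + (∑ s' : S, phat s0 (π s0) s' * W s') - W s0) := by
      rw [hV s0]
      simp only [mul_sub, Finset.sum_sub_distrib]
      ring
    calc M = |V s0 - W s0| := hs0
    _ ≤ |∑ s' : S, phat s0 (π s0) s' * (V s' - W s')| +
        |rhat s0 (π s0) + (∑ s' : S, phat s0 (π s0) s' * W s') - W s0| := by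
          rw [h1]; exact abs_add_le _ _
    _ ≤ (∑ s' : S, phat s0 (π s0) s' * M) + t := by
          gcongr
          calc |∑ s' : S, phat s0 (π s0) s' * (V s' - W s')|
              ≤ ∑ s' : S, |phat s0 (π s0) s' * (V s' - W s')| :=
                Finset.abs_sum_le_sum_abs _ _
            _ ≤ ∑ s' : S, phat s0 (π s0) s' * M := by
                apply Finset.sum_le_sum
                intro x _
                rw [abs_mul, abs_of_nonneg (hphat _ _ _)]
                exact mul_le_mul_of_nonneg_left (hMle x) (hphat _ _ _)
          exact hres s0
    _ ≤ γhat * M + t := by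
          rw [← Finset.sum_mul]
          gcongr
  have : M ≤ t / (1 - γhat) := by
    rw [le_div_iff₀ hpos]
    nlinarith
  exact fun s => le_trans (hMle s) this

/-- Lemma 4 (deterministic content): if the approximate SMDP's Bellman backups of the
true values have residual at most `t` on the relevant policies, the planning loss in
the intent-induced SMDP is at most `2t / (1 - γ̄̂)`. -/
theorem planning_loss_residual_bound {S O : Type*} [Fintype S] [Fintype O] [Nonempty S] [Nonempty O]
    (rI rhat : S → O → ℝ) (pI phat : S → O → S → ℝ) (γhat : ℝ)
    (hpI : ∀ s o s', 0 ≤ pI s o s') (hphat : ∀ s o s', 0 ≤ phat s o s')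
    (hγ : γhat = fmax (fun so : S × O => ∑ s' : S, phat so.1 so.2 s'))
    (hγlt : γhat < 1)
    (πstar πhat : S → O)
    (VstarMI VhatMI VstarMhat VhatMhat : S → ℝ)
    (hVstarMI : ∀ s, VstarMI s = rI s (πstar s) + ∑ s' : S, pI s (πstar s) s' * VstarMI s')
    (hVhatMI : ∀ s, VhatMI s = rI s (πhat s) + ∑ s' : S, pI s (πhat s) s' * VhatMI s')
    (hVstarMhat : ∀ s, VstarMhat s =
      rhat s (πstar s) + ∑ s' : S, phat s (πstar s) s' * VstarMhat s')
    (hVhatMhat : ∀ s, VhatMhat s =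
      rhat s (πhat s) + ∑ s' : S, phat s (πhat s) s' * VhatMhat s')
    (hopt : ∀ s, VhatMI s ≤ VstarMI s)
    (hopthat : ∀ s, VstarMhat s ≤ VhatMhat s)
    (t : ℝ) (ht : 0 ≤ t)
    (hres_star : ∀ s,
      |rhat s (πstar s) + (∑ s' : S, phat s (πstar s) s' * VstarMI s') - VstarMI s| ≤ t)
    (hres_hat : ∀ s,
      |rhat s (πhat s) + (∑ s' : S, phat s (πhat s) s' * VhatMI s') - VhatMI s| ≤ t) :
    fmax (fun s : S => |VstarMI s - VhatMI s|) ≤ 2 * t / (1 - γhat) := by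
  have hstar := key_sim_bound rhat phat γhat hphat hγ hγlt πstar VstarMhat VstarMI t
    hVstarMhat hres_star
  have hhat := key_sim_bound rhat phat γhat hphat hγ hγlt πhat VhatMhat VhatMI t
    hVhatMhat hres_hat
  have hpos : (0 : ℝ) < 1 - γhat := by linarith
  apply Finset.sup'_le
  intro s _
  have h1 := abs_le.mp (hstar s)
  have h2 := abs_le.mp (hhat s)
  have h3 := hopt s
  have h4 := hopthat s
  rw [abs_of_nonneg (by linarith)]
  have : 2 * t / (1 - γhat) = t / (1 - γhat) + t / (1 - γhat) := by ring
  linarith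
end

section
/- Let S and O be finite nonempty sets. Let M = (r,p), M_I = (r,p_I), and M̂ = (r,p̂) be SMDP models over (S,O) sharing the same reward function r with 0 ≤ r(s,o) ≤ Rmax, with ∑_{s'} p(s,o,s') ≤ γ̄, ∑_{s'} p_I(s,o,s') ≤ γ̄ and ∑_{s'} p̂(s,o,s') ≤ γ̄ for all (s,o) where γ̄ < 1, and with max_{s,o} ∑_{s'} |p(s,o,s') − p_I(s,o,s')| ≤ γ̄ · ζ. Let Q*, Q*_I be Bellman-optimal value functions for M and M_I, let π̂ : S → O be a deterministic policy with value V^{π̂}_M in M and V^{π̂}_{M_I} in M_I, and let V*(s) = max_o Q*(s,o), V*_{M_I}(s) = max_o Q*_I(s,o). If the estimation error satisfies ‖V*_{M_I} − V^{π̂}_{M_I}‖_∞ ≤ ε̂, then ‖V* − V^{π̂}_M‖_∞ ≤ 4 γ̄ ζ Rmax / (1 − γ̄)² + ε̂. -/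
lemma abs_sum_mul_le {S : Type*} [Fintype S] (q V : S → ℝ) (C : ℝ) (hC : 0 ≤ C)
    (hV : ∀ s, |V s| ≤ C) : |∑ s : S, q s * V s| ≤ (∑ s : S, |q s|) * C := by
  calc |∑ s : S, q s * V s| ≤ ∑ s : S, |q s * V s| := Finset.abs_sum_le_sum_abs _ _
    _ ≤ ∑ s : S, |q s| * C := by
        refine Finset.sum_le_sum fun s _ => ?_
        rw [abs_mul]
        exact mul_le_mul_of_nonneg_left (hV s) (abs_nonneg _)
    _ = (∑ s : S, |q s|) * C := (Finset.sum_mul _ _ _).symm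

lemma abs_sum_mul_le' {S : Type*} [Fintype S] (q V : S → ℝ) (C : ℝ) (hC : 0 ≤ C)
    (hq : ∀ s, 0 ≤ q s) (hV : ∀ s, |V s| ≤ C) :
    |∑ s : S, q s * V s| ≤ (∑ s : S, q s) * C := by
  have := abs_sum_mul_le q V C hC hV
  simpa [abs_of_nonneg (hq _)] using this

lemma contraction_bound {γ B C : ℝ} (hγ : γ < 1) (h : B ≤ C + γ * B) :
    B ≤ C / (1 - γ) := by
  rw [le_div_iff₀ (by linarith)]
  nlinarith

/-- Corollary 3 (multi-time-model-of-intent planning loss), deterministic form. -/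
theorem mtm_planning_loss_bound {S O : Type*} [Fintype S] [Fintype O] [Nonempty S] [Nonempty O]
    (r : S → O → ℝ) (p pI phat : S → O → S → ℝ)
    (Rmax γbar ζ εhat : ℝ)
    (hr0 : ∀ s o, 0 ≤ r s o) (hrR : ∀ s o, r s o ≤ Rmax)
    (hp : ∀ s o s', 0 ≤ p s o s') (hpI : ∀ s o s', 0 ≤ pI s o s')
    (hphat : ∀ s o s', 0 ≤ phat s o s')
    (hγp : ∀ s o, ∑ s' : S, p s o s' ≤ γbar)
    (hγpI : ∀ s o, ∑ s' : S, pI s o s' ≤ γbar)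
    (hγphat : ∀ s o, ∑ s' : S, phat s o s' ≤ γbar)
    (hγlt : γbar < 1)
    (hζ : fmax (fun so : S × O => ∑ s' : S, |p so.1 so.2 s' - pI so.1 so.2 s'|) ≤ γbar * ζ)
    (Qstar QI : S → O → ℝ)
    (hQstar : ∀ s o, Qstar s o = r s o + ∑ s' : S, p s o s' * fmax (fun o' => Qstar s' o'))
    (hQI : ∀ s o, QI s o = r s o + ∑ s' : S, pI s o s' * fmax (fun o' => QI s' o'))
    (πhat : S → O)
    (VhatM VhatMI : S → ℝ)
    (hVhatM : ∀ s, VhatM s = r s (πhat s) + ∑ s' : S, p s (πhat s) s' * VhatM s')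
    (hVhatMI : ∀ s, VhatMI s = r s (πhat s) + ∑ s' : S, pI s (πhat s) s' * VhatMI s')
    (Vstar VstarMI : S → ℝ)
    (hVstar : ∀ s, Vstar s = fmax (fun o => Qstar s o))
    (hVstarMI : ∀ s, VstarMI s = fmax (fun o => QI s o))
    (hest : fmax (fun s : S => |VstarMI s - VhatMI s|) ≤ εhat) :
    fmax (fun s : S => |Vstar s - VhatM s|) ≤
      4 * γbar * ζ * Rmax / (1 - γbar) ^ 2 + εhat := by
  -- basic nonnegativity facts
  obtain ⟨s0⟩ := (inferInstance : Nonempty S)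
  obtain ⟨o0⟩ := (inferInstance : Nonempty O)
  have h1γ : 0 < 1 - γbar := by linarith
  have hγ0 : 0 ≤ γbar :=
    le_trans (Finset.sum_nonneg fun s _ => hp s0 o0 s) (hγp s0 o0)
  have hR0 : 0 ≤ Rmax := le_trans (hr0 s0 o0) (hrR s0 o0)
  have hγζ0 : 0 ≤ γbar * ζ :=
    le_trans (le_trans (Finset.sum_nonneg fun s _ => abs_nonneg _)
      (le_fmax (fun so : S × O => ∑ s' : S, |p so.1 so.2 s' - pI so.1 so.2 s'|) (s0, o0))) hζ
  set Vb : ℝ := Rmax / (1 - γbar) with hVbdef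
  have hVb0 : 0 ≤ Vb := div_nonneg hR0 (le_of_lt h1γ)
  have hζso : ∀ s o, ∑ s' : S, |p s o s' - pI s o s'| ≤ γbar * ζ := fun s o =>
    le_trans (le_fmax (fun so : S × O => ∑ s' : S, |p so.1 so.2 s' - pI so.1 so.2 s'|) (s, o)) hζ
  -- bound on Qstar
  set B : ℝ := fmax (fun so : S × O => |Qstar so.1 so.2|) with hBdef
  have hBle : ∀ s o, |Qstar s o| ≤ B := fun s o =>
    le_fmax (fun so : S × O => |Qstar so.1 so.2|) (s, o)
  have hB0 : 0 ≤ B := le_trans (abs_nonneg _) (hBle s0 o0)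
  have hVsB : ∀ s, |fmax (fun o' => Qstar s o')| ≤ B := fun s =>
    abs_fmax_le fun o => hBle s o
  have hBVb : B ≤ Vb := by
    have hstep : B ≤ Rmax + γbar * B := by
      refine fmax_le fun so => ?_
      rw [hQstar so.1 so.2]
      have h1 : |∑ s' : S, p so.1 so.2 s' * fmax (fun o' => Qstar s' o')|
          ≤ (∑ s' : S, p so.1 so.2 s') * B :=
        abs_sum_mul_le' _ _ B hB0 (hp so.1 so.2) (fun s' => hVsB s')
      have h2 : (∑ s' : S, p so.1 so.2 s') * B ≤ γbar * B :=
        mul_le_mul_of_nonneg_right (hγp so.1 so.2) hB0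
      have h3 := abs_add_le (r so.1 so.2) (∑ s' : S, p so.1 so.2 s' * fmax (fun o' => Qstar s' o'))
      have h4 : |r so.1 so.2| ≤ Rmax := abs_le.2 ⟨by linarith [hr0 so.1 so.2], hrR so.1 so.2⟩
      calc |r so.1 so.2 + ∑ s' : S, p so.1 so.2 s' * fmax (fun o' => Qstar s' o')|
          ≤ |r so.1 so.2| + |∑ s' : S, p so.1 so.2 s' * fmax (fun o' => Qstar s' o')| := h3
        _ ≤ Rmax + γbar * B := by linarith
    exact contraction_bound hγlt hstep
  -- bound on VhatM
  set Bh : ℝ := fmax (fun s : S => |VhatM s|) with hBhdef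
  have hBhle : ∀ s, |VhatM s| ≤ Bh := fun s => le_fmax (fun s : S => |VhatM s|) s
  have hBh0 : 0 ≤ Bh := le_trans (abs_nonneg _) (hBhle s0)
  have hBhVb : Bh ≤ Vb := by
    have hstep : Bh ≤ Rmax + γbar * Bh := by
      refine fmax_le fun s => ?_
      rw [hVhatM s]
      have h1 : |∑ s' : S, p s (πhat s) s' * VhatM s'| ≤ (∑ s' : S, p s (πhat s) s') * Bh :=
        abs_sum_mul_le' _ _ Bh hBh0 (hp s (πhat s)) hBhle
      have h2 : (∑ s' : S, p s (πhat s) s') * Bh ≤ γbar * Bh :=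
        mul_le_mul_of_nonneg_right (hγp s (πhat s)) hBh0
      have h3 := abs_add_le (r s (πhat s)) (∑ s' : S, p s (πhat s) s' * VhatM s')
      have h4 : |r s (πhat s)| ≤ Rmax := abs_le.2 ⟨by linarith [hr0 s (πhat s)], hrR s (πhat s)⟩
      calc |r s (πhat s) + ∑ s' : S, p s (πhat s) s' * VhatM s'|
          ≤ |r s (πhat s)| + |∑ s' : S, p s (πhat s) s' * VhatM s'| := h3
        _ ≤ Rmax + γbar * Bh := by linarith
    exact contraction_bound hγlt hstep
  set K : ℝ := γbar * ζ * Vb / (1 - γbar) with hKdef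
  have hK0 : 0 ≤ K := div_nonneg (mul_nonneg hγζ0 hVb0) (le_of_lt h1γ)
  -- bound ‖Qstar - QI‖ ≤ K
  set D : ℝ := fmax (fun so : S × O => |Qstar so.1 so.2 - QI so.1 so.2|) with hDdef
  have hDle : ∀ s o, |Qstar s o - QI s o| ≤ D := fun s o =>
    le_fmax (fun so : S × O => |Qstar so.1 so.2 - QI so.1 so.2|) (s, o)
  have hD0 : 0 ≤ D := le_trans (abs_nonneg _) (hDle s0 o0)
  have hDVdiff : ∀ s, |fmax (fun o' => Qstar s o') - fmax (fun o' => QI s o')| ≤ D := fun s =>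
    abs_fmax_sub_fmax_le fun o => hDle s o
  have hDK : D ≤ K := by
    have hstep : D ≤ γbar * ζ * Vb + γbar * D := by
      refine fmax_le fun so => ?_
      obtain ⟨s, o⟩ := so
      have hsplit : Qstar s o - QI s o =
          (∑ s' : S, (p s o s' - pI s o s') * fmax (fun o' => Qstar s' o'))
          + ∑ s' : S, pI s o s' * (fmax (fun o' => Qstar s' o') - fmax (fun o' => QI s' o')) := by
        rw [hQstar s o, hQI s o]
        rw [← Finset.sum_add_distrib]
        ring_nf
        rw [← Finset.sum_sub_distrib]
      have h1 : |∑ s' : S, (p s o s' - pI s o s') * fmax (fun o' => Qstar s' o')|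
          ≤ (∑ s' : S, |p s o s' - pI s o s'|) * Vb :=
        abs_sum_mul_le _ _ Vb hVb0 (fun s' => le_trans (hVsB s') hBVb)
      have h1' : (∑ s' : S, |p s o s' - pI s o s'|) * Vb ≤ γbar * ζ * Vb :=
        mul_le_mul_of_nonneg_right (hζso s o) hVb0
      have h2 : |∑ s' : S, pI s o s' * (fmax (fun o' => Qstar s' o') - fmax (fun o' => QI s' o'))|
          ≤ (∑ s' : S, pI s o s') * D :=
        abs_sum_mul_le' _ _ D hD0 (hpI s o) hDVdiff
      have h2' : (∑ s' : S, pI s o s') * D ≤ γbar * D :=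
        mul_le_mul_of_nonneg_right (hγpI s o) hD0
      calc |Qstar s o - QI s o| ≤ _ + _ := hsplit ▸ abs_add_le _ _
        _ ≤ γbar * ζ * Vb + γbar * D := by linarith
    exact contraction_bound hγlt hstep
  -- bound ‖VhatM - VhatMI‖ ≤ K
  set E : ℝ := fmax (fun s : S => |VhatM s - VhatMI s|) with hEdef
  have hEle : ∀ s, |VhatM s - VhatMI s| ≤ E := fun s =>
    le_fmax (fun s : S => |VhatM s - VhatMI s|) s
  have hE0 : 0 ≤ E := le_trans (abs_nonneg _) (hEle s0)
  have hEK : E ≤ K := by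
    have hstep : E ≤ γbar * ζ * Vb + γbar * E := by
      refine fmax_le fun s => ?_
      have hsplit : VhatM s - VhatMI s =
          (∑ s' : S, (p s (πhat s) s' - pI s (πhat s) s') * VhatM s')
          + ∑ s' : S, pI s (πhat s) s' * (VhatM s' - VhatMI s') := by
        rw [hVhatM s, hVhatMI s]
        rw [← Finset.sum_add_distrib]
        ring_nf
        rw [← Finset.sum_sub_distrib]
      have h1 : |∑ s' : S, (p s (πhat s) s' - pI s (πhat s) s') * VhatM s'|
          ≤ (∑ s' : S, |p s (πhat s) s' - pI s (πhat s) s'|) * Vb :=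
        abs_sum_mul_le _ _ Vb hVb0 (fun s' => le_trans (hBhle s') hBhVb)
      have h1' : (∑ s' : S, |p s (πhat s) s' - pI s (πhat s) s'|) * Vb ≤ γbar * ζ * Vb :=
        mul_le_mul_of_nonneg_right (hζso s (πhat s)) hVb0
      have h2 : |∑ s' : S, pI s (πhat s) s' * (VhatM s' - VhatMI s')|
          ≤ (∑ s' : S, pI s (πhat s) s') * E :=
        abs_sum_mul_le' _ _ E hE0 (hpI s (πhat s)) hEle
      have h2' : (∑ s' : S, pI s (πhat s) s') * E ≤ γbar * E :=
        mul_le_mul_of_nonneg_right (hγpI s (πhat s)) hE0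
      calc |VhatM s - VhatMI s| ≤ _ + _ := hsplit ▸ abs_add_le _ _
        _ ≤ γbar * ζ * Vb + γbar * E := by linarith
    exact contraction_bound hγlt hstep
  -- combine
  have hKval : K = γbar * ζ * Rmax / (1 - γbar) ^ 2 := by
    rw [hKdef, hVbdef, sq, ← div_div, mul_div_assoc, mul_div_assoc]
    exact (mul_div_assoc (γbar * ζ) (Rmax / (1 - γbar)) (1 - γbar)).symm
  refine fmax_le fun s => ?_
  have ha : |Vstar s - VstarMI s| ≤ D := by
    rw [hVstar s, hVstarMI s]; exact hDVdiff s
  have hb : |VstarMI s - VhatMI s| ≤ εhat :=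
    le_trans (le_fmax (fun s : S => |VstarMI s - VhatMI s|) s) hest
  have hc : |VhatMI s - VhatM s| ≤ E := by
    rw [abs_sub_comm]; exact hEle s
  have htri : |Vstar s - VhatM s| ≤
      |Vstar s - VstarMI s| + |VstarMI s - VhatMI s| + |VhatMI s - VhatM s| := by
    calc |Vstar s - VhatM s| = |(Vstar s - VstarMI s) + (VstarMI s - VhatMI s)
        + (VhatMI s - VhatM s)| := by ring_nf
      _ ≤ _ := by
        refine le_trans (abs_add_le _ _) ?_
        exact add_le_add (abs_add_le _ _) le_rfl
  have hKfinal : 2 * K ≤ 4 * γbar * ζ * Rmax / (1 - γbar) ^ 2 := by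
    have : (4 : ℝ) * γbar * ζ * Rmax / (1 - γbar) ^ 2 = 4 * K := by rw [hKval]; ring
    rw [this]; linarith
  linarith
end

section
/- Let S and O be finite nonempty sets and let M₁ = (r,p₁) and M₂ = (r,p₂) be SMDP models over (S,O) sharing the same reward function r, with γ̄₂ := max_{s,o} ∑_{s'} p₂(s,o,s') < 1. Let Q₁ and Q₂ be Bellman-optimal value functions for M₁ and M₂ respectively, and let V₁(s) = max_o Q₁(s,o). Then ‖Q₁ − Q₂‖_∞ ≤ (1 − γ̄₂)⁻¹ · max_{s,o} | ∑_{s'} ( p₁(s,o,s') − p₂(s,o,s') ) · V₁(s') |. -/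
lemma abs_fmax_sub_fmax {α : Type*} [Fintype α] [Nonempty α] (f g : α → ℝ) :
    |fmax f - fmax g| ≤ fmax (fun a => |f a - g a|) := by
  rw [abs_sub_le_iff]
  constructor
  · have : fmax f ≤ fmax g + fmax (fun a => |f a - g a|) := by
      apply fmax_le; intro a
      have h1 := le_fmax g a
      have h2 := le_fmax (fun a => |f a - g a|) a
      have := abs_sub_le_iff.mp (le_refl |f a - g a|)
      have : f a - g a ≤ |f a - g a| := le_abs_self _
      linarith
    linarith
  · have : fmax g ≤ fmax f + fmax (fun a => |f a - g a|) := by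
      apply fmax_le; intro a
      have h1 := le_fmax f a
      have h2 := le_fmax (fun a => |f a - g a|) a
      have : g a - f a ≤ |f a - g a| := by
        rw [abs_sub_comm]; exact le_abs_self _
      linarith
    linarith

/-- Simulation-lemma-style bound (Terms (B) and (C) in Theorem 3): optimal value functions
of two SMDPs with identical rewards differ by at most the backed-up value gap. -/
theorem simulation_lemma {S O : Type*} [Fintype S] [Fintype O] [Nonempty S] [Nonempty O]
    (r : S → O → ℝ) (p₁ p₂ : S → O → S → ℝ) (γbar₂ : ℝ)
    (hp₁ : ∀ s o s', 0 ≤ p₁ s o s') (hp₂ : ∀ s o s', 0 ≤ p₂ s o s')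
    (hγ₂ : γbar₂ = fmax (fun so : S × O => ∑ s' : S, p₂ so.1 so.2 s'))
    (hγ₂lt : γbar₂ < 1)
    (Q₁ Q₂ : S → O → ℝ)
    (hQ₁ : ∀ s o, Q₁ s o = r s o + ∑ s' : S, p₁ s o s' * fmax (fun o' => Q₁ s' o'))
    (hQ₂ : ∀ s o, Q₂ s o = r s o + ∑ s' : S, p₂ s o s' * fmax (fun o' => Q₂ s' o'))
    (V₁ : S → ℝ) (hV₁ : ∀ s, V₁ s = fmax (fun o => Q₁ s o)) :
    fmax (fun so : S × O => |Q₁ so.1 so.2 - Q₂ so.1 so.2|) ≤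
      (1 - γbar₂)⁻¹ *
        fmax (fun so : S × O =>
          |∑ s' : S, (p₁ so.1 so.2 s' - p₂ so.1 so.2 s') * V₁ s'|) := by
  set D := fmax (fun so : S × O => |Q₁ so.1 so.2 - Q₂ so.1 so.2|) with hD
  set Δ := fmax (fun so : S × O =>
      |∑ s' : S, (p₁ so.1 so.2 s' - p₂ so.1 so.2 s') * V₁ s'|) with hΔ
  have hD0 : 0 ≤ D := by
    obtain ⟨so⟩ := (inferInstance : Nonempty (S × O))
    exact le_trans (abs_nonneg _)
      (le_fmax (fun so : S × O => |Q₁ so.1 so.2 - Q₂ so.1 so.2|) so)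
  -- per-state value gap is bounded by D
  have hVgap : ∀ s' : S, |V₁ s' - fmax (fun o' => Q₂ s' o')| ≤ D := by
    intro s'
    rw [hV₁]
    refine le_trans (abs_fmax_sub_fmax _ _) ?_
    apply fmax_le; intro o'
    exact le_fmax (fun so : S × O => |Q₁ so.1 so.2 - Q₂ so.1 so.2|) (s', o')
  have key : D ≤ Δ + γbar₂ * D := by
    apply fmax_le
    rintro ⟨s, o⟩
    have hdecomp : Q₁ s o - Q₂ s o =
        (∑ s' : S, (p₁ s o s' - p₂ s o s') * V₁ s') +
        ∑ s' : S, p₂ s o s' * (V₁ s' - fmax (fun o' => Q₂ s' o')) := by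
      rw [hQ₁, hQ₂]
      rw [← Finset.sum_add_distrib]
      have : ∀ s' : S, (p₁ s o s' - p₂ s o s') * V₁ s' +
          p₂ s o s' * (V₁ s' - fmax (fun o' => Q₂ s' o')) =
          p₁ s o s' * fmax (fun o' => Q₁ s' o') - p₂ s o s' * fmax (fun o' => Q₂ s' o') := by
        intro s'; rw [hV₁]; ring
      rw [Finset.sum_congr rfl (fun s' _ => this s'), Finset.sum_sub_distrib]
      ring
    rw [hdecomp]
    refine le_trans (abs_add_le _ _) ?_
    have h1 : |∑ s' : S, (p₁ s o s' - p₂ s o s') * V₁ s'| ≤ Δ :=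
      le_fmax (fun so : S × O => |∑ s' : S, (p₁ so.1 so.2 s' - p₂ so.1 so.2 s') * V₁ s'|) (s, o)
    have h2 : |∑ s' : S, p₂ s o s' * (V₁ s' - fmax (fun o' => Q₂ s' o'))| ≤ γbar₂ * D := by
      refine le_trans (Finset.abs_sum_le_sum_abs _ _) ?_
      have hsum : ∑ s' : S, |p₂ s o s' * (V₁ s' - fmax (fun o' => Q₂ s' o'))| ≤
          ∑ s' : S, p₂ s o s' * D := by
        apply Finset.sum_le_sum
        intro s' _
        rw [abs_mul, abs_of_nonneg (hp₂ s o s')]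
        exact mul_le_mul_of_nonneg_left (hVgap s') (hp₂ s o s')
      refine le_trans hsum ?_
      rw [← Finset.sum_mul]
      have : (∑ s' : S, p₂ s o s') ≤ γbar₂ := by
        rw [hγ₂]
        exact le_fmax (fun so : S × O => ∑ s' : S, p₂ so.1 so.2 s') (s, o)
      exact mul_le_mul_of_nonneg_right this hD0
    linarith
  have hpos : 0 < 1 - γbar₂ := by linarith
  have h' : (1 - γbar₂) * D ≤ Δ := by linarith
  calc D = (1 - γbar₂)⁻¹ * ((1 - γbar₂) * D) := by field_simp
    _ ≤ (1 - γbar₂)⁻¹ * Δ := mul_le_mul_of_nonneg_left h' (by positivity)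
end
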